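/- The difference D(t) = δ_s(t) - δ_{1+iτ}(t) (where τ = Im(s), σ = Re(s)) satisfies D(t) = (σ-1/2)² t^{1/2} ∫_1^t u^{-1} ∫_1^u v^{-3/2} δ_s(v) dv du - (1/4) t^{1/2} ∫_1^t u^{-1} ∫_1^u v^{-3/2} δ_{1+iτ}(v) dv du, with D(1) = 0 and D'(1) = 0. -/

import Mathlib

open MeasureTheory Complex Filter Set Topology intervalIntegral

/-- The explicit solution ψ_{η,w}(t) = t^{Re w} [1 + (1-w) ∫_1^t u^{-1-w} η(u) du]. -/
noncomputable def psi (η : ℝ → ℂ) (w : ℂ) (t : ℝ) : ℂ :=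
  ((t ^ w.re : ℝ) : ℂ) * (1 + (1 - w) * ∫ u in (1:ℝ)..t, (u : ℂ) ^ (-1 - w) * η u)

/-- μ_η(w) = -1 - (1-w) ∫_1^∞ u^{-1-w} η(u) du. -/
noncomputable def mu (η : ℝ → ℂ) (w : ℂ) : ℂ :=
  -1 - (1 - w) * ∫ u in Set.Ioi (1:ℝ), (u : ℂ) ^ (-1 - w) * η u

/-- δ_{η,s}(t) = (2 Re s - 1)⁻¹ (ψ_{η,s}(t) - ψ_{η,1-conj s}(t)). -/
noncomputable def delta (η : ℝ → ℂ) (s : ℂ) (t : ℝ) : ℂ :=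
  (((2 * s.re - 1 : ℝ) : ℂ))⁻¹ * (psi η s t - psi η (1 - (starRingEnd ℂ) s) t)
section

variable {η : ℝ → ℂ} {c : ℝ}

lemma fubini_tri {f g : ℝ → ℂ} {t : ℝ} (hf : IntegrableOn f (Ioc 1 t)) (hg : IntegrableOn g (Ioc 1 t)) :
    ∫ u in Ioc (1:ℝ) t, g u * ∫ x in Ioc (1:ℝ) u, f x
      = ∫ x in Ioc (1:ℝ) t, (∫ u in Ioc x t, g u) * f x := by
  set μ := volume.restrict (Ioc (1:ℝ) t) with hμ
  set k : ℝ → ℝ → ℂ := fun u x => {p : ℝ × ℝ | p.2 ≤ p.1}.indicator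
    (fun p => g p.1 * f p.2) (u, x) with hk
  have hmeas : MeasurableSet {p : ℝ × ℝ | p.2 ≤ p.1} :=
    measurableSet_le measurable_snd measurable_fst
  have hkint : Integrable (Function.uncurry k) (μ.prod μ) := by
    have : Integrable (fun p : ℝ × ℝ => g p.1 * f p.2) (μ.prod μ) := hg.mul_prod hf
    exact this.indicator hmeas
  have swap := MeasureTheory.integral_integral_swap hkint
  have h1 : ∀ u ∈ Ioc (1:ℝ) t, g u * ∫ x in Ioc (1:ℝ) u, f x = ∫ x, k u x ∂μ := by
    intro u hu
    have : ∀ x, k u x = (Iic u).indicator (fun x => g u * f x) x := by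
      intro x; simp [hk, Set.indicator_apply]
    simp_rw [this]
    rw [hμ, MeasureTheory.integral_indicator (measurableSet_Iic (a := u))]
    rw [Measure.restrict_restrict (measurableSet_Iic (a := u))]
    have hset : Iic u ∩ Ioc 1 t = Ioc 1 u := by
      ext x; constructor
      · rintro ⟨h1, h2, h3⟩; exact ⟨h2, h1⟩
      · rintro ⟨h1, h2⟩; exact ⟨h2, h1, h2.trans hu.2⟩
    rw [hset, MeasureTheory.integral_const_mul]
  have h2 : ∀ x ∈ Ioc (1:ℝ) t, (∫ u, k u x ∂μ) = (∫ u in Ioc x t, g u) * f x := by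
    intro x hx
    have : ∀ u, k u x = (Ici x).indicator (fun u => g u * f x) u := by
      intro u; simp [hk, Set.indicator_apply]
    simp_rw [this]
    rw [hμ, MeasureTheory.integral_indicator (measurableSet_Ici (a := x))]
    rw [Measure.restrict_restrict (measurableSet_Ici (a := x))]
    have hset : Ici x ∩ Ioc 1 t = Icc x t := by
      ext u; constructor
      · rintro ⟨h1, h2, h3⟩; exact ⟨h1, h3⟩
      · rintro ⟨h1, h2⟩; exact ⟨h1, hx.1.trans_le h1, h2⟩
    rw [hset, ← MeasureTheory.integral_Icc_eq_integral_Ioc, MeasureTheory.integral_mul_const]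
  calc ∫ u in Ioc (1:ℝ) t, g u * ∫ x in Ioc (1:ℝ) u, f x
      = ∫ u, ∫ x, k u x ∂μ ∂μ := setIntegral_congr_fun measurableSet_Ioc h1
    _ = ∫ x, ∫ u, k u x ∂μ ∂μ := swap
    _ = ∫ x in Ioc (1:ℝ) t, (∫ u in Ioc x t, g u) * f x :=
        setIntegral_congr_fun measurableSet_Ioc h2

lemma int_eta (hloc : LocallyIntegrableOn η (Set.Ici 1)) (z : ℂ) {t : ℝ} :
    IntegrableOn (fun x : ℝ => (x:ℂ) ^ z * η x) (Ioc 1 t) := by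
  rcases le_or_gt t 1 with ht | ht
  · rw [Ioc_eq_empty (by exact fun h => absurd ht (not_le.2 h))]
    simp [IntegrableOn]
  have hη : IntegrableOn η (Icc 1 t) :=
    hloc.integrableOn_compact_subset (Icc_subset_Ici_self) isCompact_Icc
  have hcont : ContinuousOn (fun x : ℝ => (x:ℂ) ^ z) (Icc 1 t) := by
    intro x hx
    exact (Complex.continuousAt_ofReal_cpow_const x z
      (Or.inr (by linarith [hx.1] : x ≠ 0))).continuousWithinAt
  exact (IntegrableOn.continuousOn_mul hcont hη isCompact_Icc).mono_set Ioc_subset_Icc_self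

lemma int_eta' (hloc : LocallyIntegrableOn η (Set.Ici 1)) (z : ℂ) {t : ℝ} (ht : 1 ≤ t) :
    IntervalIntegrable (fun x : ℝ => (x:ℂ) ^ z * η x) volume 1 t :=
  (intervalIntegrable_iff_integrableOn_Ioc_of_le ht).2 (int_eta hloc z)

lemma cont_primitive {f : ℝ → ℂ} (hf : ∀ T : ℝ, 1 ≤ T → IntegrableOn f (Ioc 1 T)) :
    ContinuousOn (fun t => ∫ u in (1:ℝ)..t, f u) (Ici 1) := by
  intro x hx
  have hx1 : (1:ℝ) ≤ x := hx
  have hT : (1:ℝ) ≤ x + 1 := by linarith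
  have hint : IntegrableOn f (uIcc 1 (x+1)) := by
    rw [uIcc_of_le hT, integrableOn_Icc_iff_integrableOn_Ioc]
    exact hf _ hT
  have h := (intervalIntegral.continuousOn_primitive_interval hint) x
    (by rw [uIcc_of_le hT]; exact ⟨hx1, by linarith⟩)
  refine h.mono_of_mem_nhdsWithin ?_
  have : Icc (1:ℝ) (x+1) ∈ 𝓝[Ici 1] x := by
    rw [← Ici_inter_Iic]
    exact Filter.inter_mem self_mem_nhdsWithin
      (mem_nhdsWithin_of_mem_nhds (Iic_mem_nhds (by linarith)))
  rwa [uIcc_of_le hT]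

lemma psi_cont (hloc : LocallyIntegrableOn η (Set.Ici 1)) (w : ℂ) :
    ContinuousOn (psi η w) (Ici 1) := by
  unfold psi
  apply ContinuousOn.mul
  · apply Continuous.comp_continuousOn Complex.continuous_ofReal
    intro x hx
    exact (Real.continuousAt_rpow_const x w.re
      (Or.inl (by exact_mod_cast (by linarith [mem_Ici.1 hx] : x ≠ 0)))).continuousWithinAt
  · exact continuousOn_const.add (continuousOn_const.mul
      (cont_primitive (fun T hT => int_eta hloc (-1-w))))

lemma psi_one (w : ℂ) : psi η w 1 = 1 := by
  simp [psi]

lemma keyA (hloc : LocallyIntegrableOn η (Set.Ici 1)) {w : ℂ} (hw : w.re ≠ 1/2)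
    {t : ℝ} (ht : 1 ≤ t) :
    ∫ u in (1:ℝ)..t, (u:ℂ) ^ (-(3/2) : ℂ) * psi η w u
      = ((w.re:ℂ) - 1/2)⁻¹ *
        ( ((t:ℂ) ^ ((w.re:ℂ) - 1/2)) * (1 + (1 - w) * ∫ x in (1:ℝ)..t, (x:ℂ) ^ (-1-w) * η x)
          - 1 - (1 - w) * ∫ v in (1:ℝ)..t, (v:ℂ) ^ (-(3/2) - (w.im:ℂ) * I) * η v ) := by
  set A : ℂ := ((w.re : ℝ) : ℂ) with hA
  have hAhalf : A ≠ 1/2 := by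
    rw [hA]; intro h; apply hw
    have : ((w.re : ℝ) : ℂ) = ((1/2 : ℝ) : ℂ) := by push_cast; exact h
    exact_mod_cast this
  have hA2 : A - 1/2 ≠ 0 := sub_ne_zero.2 hAhalf
  have hr32 : A - 3/2 ≠ -1 := by intro h; apply hA2; linear_combination h
  have hAw : A - w = -((w.im:ℂ) * I) := by
    rw [hA]; linear_combination Complex.re_add_im w
  have h0t : (0:ℝ) ∉ uIcc 1 t := by
    rw [uIcc_of_le ht]; rintro ⟨h1, -⟩; linarith
  have hFcont : ContinuousOn (fun u : ℝ => ∫ x in (1:ℝ)..u, (x:ℂ) ^ (-1-w) * η x)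
      (uIcc 1 t) := by
    rw [uIcc_of_le ht]
    exact (cont_primitive (fun T _ => int_eta hloc (-1-w))).mono
      (fun x hx => hx.1)
  have hcpow_cont : ContinuousOn (fun u : ℝ => (u:ℂ) ^ (A - 3/2)) (uIcc 1 t) := by
    intro x hx
    rw [uIcc_of_le ht] at hx
    exact (Complex.continuousAt_ofReal_cpow_const x _
      (Or.inr (by linarith [hx.1] : x ≠ 0))).continuousWithinAt
  have hcong : EqOn (fun u : ℝ => (u:ℂ) ^ (-(3/2) : ℂ) * psi η w u)
      (fun u : ℝ => (u:ℂ) ^ (A - 3/2)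
        + (1 - w) * ((u:ℂ) ^ (A - 3/2) * ∫ x in (1:ℝ)..u, (x:ℂ) ^ (-1-w) * η x))
      (uIcc 1 t) := by
    intro u hu
    rw [uIcc_of_le ht] at hu
    have hu0 : (0:ℝ) < u := lt_of_lt_of_le one_pos hu.1
    have hne : (u:ℂ) ≠ 0 := Complex.ofReal_ne_zero.2 hu0.ne'
    simp only [psi]
    rw [Complex.ofReal_cpow hu0.le, ← mul_assoc,
      ← Complex.cpow_add _ _ hne,
      show (-(3/2) : ℂ) + ((w.re : ℝ) : ℂ) = A - 3/2 by rw [hA]; ring]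
    ring
  rw [intervalIntegral.integral_congr hcong]
  have h1 : IntervalIntegrable (fun u : ℝ => (u:ℂ) ^ (A - 3/2)) volume 1 t :=
    intervalIntegrable_cpow (Or.inr h0t)
  have h2 : IntervalIntegrable
      (fun u : ℝ => (u:ℂ) ^ (A - 3/2) * ∫ x in (1:ℝ)..u, (x:ℂ) ^ (-1-w) * η x)
      volume 1 t := (hcpow_cont.mul hFcont).intervalIntegrable
  rw [intervalIntegral.integral_add h1 (h2.const_mul (1 - w)),
    intervalIntegral.integral_const_mul]
  have e1 : ∫ u in (1:ℝ)..t, (u:ℂ) ^ (A - 3/2)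
      = ((t:ℂ) ^ (A - 1/2) - 1) / (A - 1/2) := by
    rw [integral_cpow (Or.inr ⟨hr32, h0t⟩), show A - 3/2 + 1 = A - 1/2 by ring]
    norm_num
  have e2 : ∫ u in (1:ℝ)..t, (u:ℂ) ^ (A - 3/2) * ∫ x in (1:ℝ)..u, (x:ℂ) ^ (-1-w) * η x
      = ((A - 1/2)⁻¹ * (t:ℂ) ^ (A - 1/2)) * (∫ x in (1:ℝ)..t, (x:ℂ) ^ (-1-w) * η x)
        - (A - 1/2)⁻¹ * ∫ v in (1:ℝ)..t, (v:ℂ) ^ (-(3/2) - (w.im:ℂ) * I) * η v := by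
    rw [intervalIntegral.integral_of_le ht]
    have step1 : ∫ u in Ioc (1:ℝ) t, (u:ℂ) ^ (A - 3/2) * ∫ x in (1:ℝ)..u, (x:ℂ) ^ (-1-w) * η x
        = ∫ u in Ioc (1:ℝ) t, (u:ℂ) ^ (A - 3/2) * ∫ x in Ioc (1:ℝ) u, (x:ℂ) ^ (-1-w) * η x := by
      refine setIntegral_congr_fun measurableSet_Ioc (fun u hu => ?_)
      rw [intervalIntegral.integral_of_le hu.1.le]
    have hg : IntegrableOn (fun u : ℝ => (u:ℂ) ^ (A - 3/2)) (Ioc 1 t) := by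
      have hc2 : ContinuousOn (fun u : ℝ => (u:ℂ) ^ (A - 3/2)) (Icc 1 t) := by
        rw [← uIcc_of_le ht]; exact hcpow_cont
      exact (hc2.integrableOn_compact isCompact_Icc).mono_set Ioc_subset_Icc_self
    rw [step1, fubini_tri (int_eta hloc (-1-w)) hg]
    have step2 : ∫ x in Ioc (1:ℝ) t, (∫ u in Ioc x t, (u:ℂ) ^ (A - 3/2)) * ((x:ℂ) ^ (-1-w) * η x)
        = ∫ x in Ioc (1:ℝ) t,
            (((A - 1/2)⁻¹ * (t:ℂ) ^ (A - 1/2)) * ((x:ℂ) ^ (-1-w) * η x)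
              - (A - 1/2)⁻¹ * ((x:ℂ) ^ (-(3/2) - (w.im:ℂ) * I) * η x)) := by
      refine setIntegral_congr_fun measurableSet_Ioc (fun x hx => ?_)
      have hx0 : (0:ℝ) < x := lt_trans one_pos hx.1
      have hxne : (x:ℂ) ≠ 0 := Complex.ofReal_ne_zero.2 hx0.ne'
      have h0xt : (0:ℝ) ∉ uIcc x t := by
        rw [uIcc_of_le hx.2]; rintro ⟨hh, -⟩; linarith
      have hiu : ∫ u in Ioc x t, (u:ℂ) ^ (A - 3/2)
          = ((t:ℂ) ^ (A - 1/2) - (x:ℂ) ^ (A - 1/2)) / (A - 1/2) := by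
        rw [← intervalIntegral.integral_of_le hx.2, integral_cpow (Or.inr ⟨hr32, h0xt⟩),
          show A - 3/2 + 1 = A - 1/2 by ring]
      have hxpow : (x:ℂ) ^ (A - 1/2) * (x:ℂ) ^ (-1-w) = (x:ℂ) ^ (-(3/2) - (w.im:ℂ) * I) := by
        rw [← Complex.cpow_add _ _ hxne]
        congr 1
        linear_combination hAw
      rw [hiu, ← hxpow]
      field_simp
    rw [step2, integral_sub (((int_eta hloc (-1-w)).const_mul _))
        ((int_eta hloc (-(3/2) - (w.im:ℂ) * I)).const_mul _),
      MeasureTheory.integral_const_mul, MeasureTheory.integral_const_mul,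
      ← intervalIntegral.integral_of_le ht, ← intervalIntegral.integral_of_le ht]
  rw [e1, e2]
  field_simp
  ring



lemma cpow_contOn (z : ℂ) : ContinuousOn (fun u : ℝ => (u:ℂ) ^ z) (Ici 1) := by
  intro x hx
  exact (Complex.continuousAt_ofReal_cpow_const x z
    (Or.inr (by linarith [mem_Ici.1 hx] : x ≠ 0))).continuousWithinAt

lemma uIcc_sub (t : ℝ) (ht : 1 ≤ t) : uIcc (1:ℝ) t ⊆ Ici 1 := by
  rw [uIcc_of_le ht]; exact fun x hx => hx.1

lemma int_psi (hloc : LocallyIntegrableOn η (Set.Ici 1)) (w z : ℂ) {t : ℝ} (ht : 1 ≤ t) :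
    IntervalIntegrable (fun u : ℝ => (u:ℂ) ^ z * psi η w u) volume 1 t :=
  (((cpow_contOn z).mono (uIcc_sub t ht)).mul
    ((psi_cont hloc w).mono (uIcc_sub t ht))).intervalIntegrable

lemma delta_cont (hloc : LocallyIntegrableOn η (Set.Ici 1)) (s' : ℂ) :
    ContinuousOn (delta η s') (Ici 1) := by
  unfold delta
  exact continuousOn_const.mul ((psi_cont hloc s').sub (psi_cont hloc _))

lemma int_delta (hloc : LocallyIntegrableOn η (Set.Ici 1)) (s' : ℂ) {t : ℝ} (ht : 1 ≤ t) :
    IntervalIntegrable (fun v : ℝ => (v:ℂ) ^ (-(3/2):ℂ) * delta η s' v) volume 1 t :=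
  (((cpow_contOn _).mono (uIcc_sub t ht)).mul
    ((delta_cont hloc s').mono (uIcc_sub t ht))).intervalIntegrable

lemma expand_delta (hloc : LocallyIntegrableOn η (Set.Ici 1)) (s' : ℂ) {t : ℝ} (ht : 1 ≤ t) :
    ∫ v in (1:ℝ)..t, (v:ℂ) ^ (-(3/2):ℂ) * delta η s' v
      = (((2 * s'.re - 1 : ℝ) : ℂ))⁻¹ *
          ((∫ v in (1:ℝ)..t, (v:ℂ) ^ (-(3/2):ℂ) * psi η s' v)
            - ∫ v in (1:ℝ)..t, (v:ℂ) ^ (-(3/2):ℂ) * psi η (1 - (starRingEnd ℂ) s') v) := by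
  rw [show (fun v : ℝ => (v:ℂ) ^ (-(3/2):ℂ) * delta η s' v)
      = fun v : ℝ => (((2 * s'.re - 1 : ℝ) : ℂ))⁻¹ *
          ((v:ℂ) ^ (-(3/2):ℂ) * psi η s' v
            - (v:ℂ) ^ (-(3/2):ℂ) * psi η (1 - (starRingEnd ℂ) s') v) from
      funext fun v => by unfold delta; ring]
  rw [intervalIntegral.integral_const_mul,
    intervalIntegral.integral_sub (int_psi hloc _ _ ht) (int_psi hloc _ _ ht)]

lemma key (hloc : LocallyIntegrableOn η (Set.Ici 1)) {s : ℂ} (hs : s.re ≠ 1/2)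
    {t : ℝ} (ht : 1 ≤ t) :
    delta η s t - delta η (1 + Complex.I * (s.im:ℝ)) t
      = ((t ^ ((1:ℝ)/2) : ℝ) : ℂ) * ∫ u in (1:ℝ)..t,
          (1/2 : ℂ) * (u:ℂ) ^ (-(3/2):ℂ) *
            (psi η s u + psi η (1 - (starRingEnd ℂ) s) u
              - psi η (1 + Complex.I * (s.im:ℝ)) u - psi η (Complex.I * (s.im:ℝ)) u) := by
  have ht0 : (0:ℝ) < t := lt_of_lt_of_le one_pos ht
  have htne : (t:ℂ) ≠ 0 := Complex.ofReal_ne_zero.2 ht0.ne'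
  have hw4 : (1:ℂ) - (starRingEnd ℂ) (1 + Complex.I * (s.im:ℝ)) = Complex.I * (s.im:ℝ) := by
    apply Complex.ext <;> simp
  have hre2 : (1 - (starRingEnd ℂ) s).re = 1 - s.re := by simp
  have him2 : (1 - (starRingEnd ℂ) s).im = s.im := by simp
  have hre3 : ((1:ℂ) + Complex.I * (s.im:ℝ)).re = 1 := by simp
  have him3 : ((1:ℂ) + Complex.I * (s.im:ℝ)).im = s.im := by simp
  have hre4 : (Complex.I * ((s.im:ℝ):ℂ)).re = 0 := by simp
  have him4 : (Complex.I * ((s.im:ℝ):ℂ)).im = s.im := by simp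
  have hs2 : (1 - (starRingEnd ℂ) s).re ≠ 1/2 := by rw [hre2]; intro h; apply hs; linarith
  have hs3 : ((1:ℂ) + Complex.I * (s.im:ℝ)).re ≠ 1/2 := by rw [hre3]; norm_num
  have hs4 : (Complex.I * ((s.im:ℝ):ℂ)).re ≠ 1/2 := by rw [hre4]; norm_num
  have h1 := int_psi hloc s (-(3/2):ℂ) ht
  have h2 := int_psi hloc (1 - (starRingEnd ℂ) s) (-(3/2):ℂ) ht
  have h3 := int_psi hloc (1 + Complex.I * (s.im:ℝ)) (-(3/2):ℂ) ht
  have h4 := int_psi hloc (Complex.I * (s.im:ℝ)) (-(3/2):ℂ) ht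
  rw [show (fun u : ℝ => (1/2 : ℂ) * (u:ℂ) ^ (-(3/2):ℂ) *
        (psi η s u + psi η (1 - (starRingEnd ℂ) s) u
          - psi η (1 + Complex.I * (s.im:ℝ)) u - psi η (Complex.I * (s.im:ℝ)) u))
      = fun u : ℝ => (1/2 : ℂ) *
          ((((u:ℂ) ^ (-(3/2):ℂ) * psi η s u + (u:ℂ) ^ (-(3/2):ℂ) * psi η (1 - (starRingEnd ℂ) s) u)
            - (u:ℂ) ^ (-(3/2):ℂ) * psi η (1 + Complex.I * (s.im:ℝ)) u)
            - (u:ℂ) ^ (-(3/2):ℂ) * psi η (Complex.I * (s.im:ℝ)) u) from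
      funext fun u => by ring]
  rw [intervalIntegral.integral_const_mul,
    intervalIntegral.integral_sub ((h1.add h2).sub h3) h4,
    intervalIntegral.integral_sub (h1.add h2) h3,
    intervalIntegral.integral_add h1 h2,
    keyA hloc hs ht, keyA hloc hs2 ht, keyA hloc hs3 ht, keyA hloc hs4 ht,
    hre2, him2, hre3, him3, hre4, him4]
  simp only [delta, psi, hw4, hre2, hre3, hre4]
  have hconj : (starRingEnd ℂ) s = 2 * ((s.re:ℝ):ℂ) - s := by
    apply Complex.ext <;> simp <;> ring
  have hsplit : ∀ r : ℝ, ((t ^ r : ℝ) : ℂ)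
      = ((t ^ ((1:ℝ)/2) : ℝ) : ℂ) * (t:ℂ) ^ (((r:ℝ):ℂ) - 1/2) := by
    intro r
    rw [Complex.ofReal_cpow ht0.le, Complex.ofReal_cpow ht0.le,
      ← Complex.cpow_add _ _ htne]
    congr 1
    push_cast
    ring
  rw [hconj, hsplit s.re, hsplit (1 - s.re), hsplit (1:ℝ), hsplit (0:ℝ)]
  push_cast
  have hσ'' : (2 * ((s.re:ℝ):ℂ) - 1) ≠ 0 := by
    intro h; apply hs
    have : ((s.re:ℝ):ℂ) = ((1/2:ℝ):ℂ) := by push_cast; linear_combination h / 2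
    exact_mod_cast this
  rw [show ((2:ℂ) * 1 - 1)⁻¹ = 1 by norm_num,
    show ((1:ℂ) - 1/2)⁻¹ = 2 by norm_num,
    show ((0:ℂ) - 1/2)⁻¹ = -2 by norm_num,
    show (((s.re:ℝ):ℂ) - 1/2)⁻¹ = 2 * (2*((s.re:ℝ):ℂ) - 1)⁻¹ by
      rw [show (((s.re:ℝ):ℂ) - 1/2) = (2*((s.re:ℝ):ℂ)-1)/2 by ring, inv_div, div_eq_mul_inv],
    show (1 - ((s.re:ℝ):ℂ) - 1/2)⁻¹ = -(2 * (2*((s.re:ℝ):ℂ) - 1)⁻¹) by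
      rw [show (1 - ((s.re:ℝ):ℂ) - 1/2) = -((2*((s.re:ℝ):ℂ)-1)/2) by ring, inv_neg, inv_div,
        div_eq_mul_inv]]
  have hc : (2 * ((s.re:ℝ):ℂ) - 1) * (2 * ((s.re:ℝ):ℂ) - 1)⁻¹ = 1 := mul_inv_cancel₀ hσ''
  linear_combination (-( ((t ^ ((1:ℝ)/2):ℝ):ℂ) *
    ∫ v in (1:ℝ)..t, (v:ℂ) ^ (-(3/2) - (s.im:ℝ) * Complex.I) * η v)) * hc

lemma keyB (hloc : LocallyIntegrableOn η (Set.Ici 1)) {w : ℂ} (hw : w.re ≠ 1/2)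
    {t : ℝ} (ht : 1 ≤ t) :
    (((w.re:ℝ):ℂ) - 1/2)^2 * ∫ v in (1:ℝ)..t, (v:ℂ) ^ (-(3/2):ℂ) * delta η w v
      = (1/2) *
        ( ((t:ℂ) ^ (((w.re:ℝ):ℂ) - 1/2)
              * (1 + (1 - w) * ∫ x in (1:ℝ)..t, (x:ℂ) ^ (-1-w) * η x)
            - 1 - (1 - w) * ∫ v in (1:ℝ)..t, (v:ℂ) ^ (-(3/2) - ((w.im:ℝ):ℂ) * I) * η v)
        + ((t:ℂ) ^ ((((1 - (starRingEnd ℂ) w).re:ℝ):ℂ) - 1/2)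
              * (1 + (1 - (1 - (starRingEnd ℂ) w)) *
                  ∫ x in (1:ℝ)..t, (x:ℂ) ^ (-1-(1 - (starRingEnd ℂ) w)) * η x)
            - 1 - (1 - (1 - (starRingEnd ℂ) w)) *
                ∫ v in (1:ℝ)..t, (v:ℂ) ^ (-(3/2) - ((w.im:ℝ):ℂ) * I) * η v)) := by
  have hre2 : (1 - (starRingEnd ℂ) w).re = 1 - w.re := by simp
  have him2 : (1 - (starRingEnd ℂ) w).im = w.im := by simp
  have hs2 : (1 - (starRingEnd ℂ) w).re ≠ 1/2 := by rw [hre2]; intro h; apply hw; linarith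
  rw [expand_delta hloc w ht, keyA hloc hw ht, keyA hloc hs2 ht, hre2, him2]
  have hσ'' : (2 * ((w.re:ℝ):ℂ) - 1) ≠ 0 := by
    intro h; apply hw
    have : ((w.re:ℝ):ℂ) = ((1/2:ℝ):ℂ) := by push_cast; linear_combination h / 2
    exact_mod_cast this
  push_cast
  rw [show (((w.re:ℝ):ℂ) - 1/2)⁻¹ = 2 * (2*((w.re:ℝ):ℂ) - 1)⁻¹ by
      rw [show (((w.re:ℝ):ℂ) - 1/2) = (2*((w.re:ℝ):ℂ)-1)/2 by ring, inv_div, div_eq_mul_inv],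
    show (1 - ((w.re:ℝ):ℂ) - 1/2)⁻¹ = -(2 * (2*((w.re:ℝ):ℂ) - 1)⁻¹) by
      rw [show (1 - ((w.re:ℝ):ℂ) - 1/2) = -((2*((w.re:ℝ):ℂ)-1)/2) by ring, inv_neg, inv_div,
        div_eq_mul_inv]]
  have hc : (2 * ((w.re:ℝ):ℂ) - 1) * (2 * ((w.re:ℝ):ℂ) - 1)⁻¹ = 1 := mul_inv_cancel₀ hσ''
  linear_combination ((((t:ℂ) ^ (((w.re:ℝ):ℂ) - 1/2)
              * (1 + (1 - w) * ∫ x in (1:ℝ)..t, (x:ℂ) ^ (-1-w) * η x)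
            - 1 - (1 - w) * ∫ v in (1:ℝ)..t, (v:ℂ) ^ (-(3/2) - ((w.im:ℝ):ℂ) * I) * η v)
        + ((t:ℂ) ^ ((1 - ((w.re:ℝ):ℂ)) - 1/2)
              * (1 + (1 - (1 - (starRingEnd ℂ) w)) *
                  ∫ x in (1:ℝ)..t, (x:ℂ) ^ (-1-(1 - (starRingEnd ℂ) w)) * η x)
            - 1 - (1 - (1 - (starRingEnd ℂ) w)) *
                ∫ v in (1:ℝ)..t, (v:ℂ) ^ (-(3/2) - ((w.im:ℝ):ℂ) * I) * η v))
    * ((2 * ((w.re:ℝ):ℂ) - 1) * (2 * ((w.re:ℝ):ℂ) - 1)⁻¹ + 1) / 2) * hc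

lemma inner_comb (hloc : LocallyIntegrableOn η (Set.Ici 1)) {s : ℂ} (hs : s.re ≠ 1/2)
    {u : ℝ} (hu : 1 ≤ u) :
    (((s.re:ℝ):ℂ) - 1/2)^2 * (∫ v in (1:ℝ)..u, (v:ℂ) ^ (-(3/2):ℂ) * delta η s v)
      - (1/4) * (∫ v in (1:ℝ)..u, (v:ℂ) ^ (-(3/2):ℂ) * delta η (1 + Complex.I * (s.im:ℝ)) v)
      = (1/2) * (u:ℂ) ^ (-(1/2):ℂ) *
          (psi η s u + psi η (1 - (starRingEnd ℂ) s) u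
            - psi η (1 + Complex.I * (s.im:ℝ)) u - psi η (Complex.I * (s.im:ℝ)) u) := by
  have hu0 : (0:ℝ) < u := lt_of_lt_of_le one_pos hu
  have hune : (u:ℂ) ≠ 0 := Complex.ofReal_ne_zero.2 hu0.ne'
  have hw4 : (1:ℂ) - (starRingEnd ℂ) (1 + Complex.I * (s.im:ℝ)) = Complex.I * (s.im:ℝ) := by
    apply Complex.ext
    · simp
    · simp
  have hre3 : ((1:ℂ) + Complex.I * (s.im:ℝ)).re = 1 := by simp
  have him3 : ((1:ℂ) + Complex.I * (s.im:ℝ)).im = s.im := by simp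
  have hre4 : (Complex.I * ((s.im:ℝ):ℂ)).re = 0 := by simp
  have hs3 : ((1:ℂ) + Complex.I * (s.im:ℝ)).re ≠ 1/2 := by rw [hre3]; norm_num
  have KB1 := keyB hloc hs hu
  have KB2 := keyB hloc hs3 hu
  rw [hw4, hre3, him3, hre4] at KB2
  rw [show ((1/4 : ℂ)) = (((1:ℝ):ℂ) - 1/2)^2 by norm_num]
  rw [KB1, KB2]
  have hconj : (starRingEnd ℂ) s = 2 * ((s.re:ℝ):ℂ) - s := by
    apply Complex.ext
    · simp; ring
    · simp
  have hsplit : ∀ r : ℝ, ((u ^ r : ℝ) : ℂ)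
      = ((u ^ ((1:ℝ)/2) : ℝ) : ℂ) * (u:ℂ) ^ (((r:ℝ):ℂ) - 1/2) := by
    intro r
    rw [Complex.ofReal_cpow hu0.le, Complex.ofReal_cpow hu0.le,
      ← Complex.cpow_add _ _ hune]
    congr 1
    push_cast
    ring
  have hre2 : (1 - (starRingEnd ℂ) s).re = 1 - s.re := by simp
  simp only [psi, hre2, hre3, hre4]
  rw [hconj, hsplit s.re, hsplit (1 - s.re), hsplit (1:ℝ), hsplit (0:ℝ)]
  have hVR : (u:ℂ) ^ (-(1/2):ℂ) * ((u ^ ((1:ℝ)/2) : ℝ) : ℂ) = 1 := by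
    rw [Complex.ofReal_cpow hu0.le, ← Complex.cpow_add _ _ hune]
    norm_num
  have hq1 : ((s.im:ℝ):ℂ) * Complex.I = s - ((s.re:ℝ):ℂ) := by
    linear_combination Complex.re_add_im s
  have hq2 : Complex.I * ((s.im:ℝ):ℂ) = s - ((s.re:ℝ):ℂ) := by
    rw [mul_comm]; exact hq1
  push_cast
  rw [hq1, hq2]
  linear_combination (-( (u:ℂ) ^ (((s.re:ℝ):ℂ) - 1/2) *
        (1 + (1 - s) * ∫ x in (1:ℝ)..u, (x:ℂ) ^ (-1 - s) * η x)
      + (u:ℂ) ^ (1 - ((s.re:ℝ):ℂ) - 1/2) *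
        (1 + (1 - (1 - (2 * ((s.re:ℝ):ℂ) - s))) *
          ∫ x in (1:ℝ)..u, (x:ℂ) ^ (-1 - (1 - (2 * ((s.re:ℝ):ℂ) - s))) * η x)
      - (u:ℂ) ^ ((1:ℂ) - 1/2) *
        (1 + (1 - (1 + (s - ((s.re:ℝ):ℂ)))) *
          ∫ x in (1:ℝ)..u, (x:ℂ) ^ (-1 - (1 + (s - ((s.re:ℝ):ℂ)))) * η x)
      - (u:ℂ) ^ ((0:ℂ) - 1/2) *
        (1 + (1 - (s - ((s.re:ℝ):ℂ))) *
          ∫ x in (1:ℝ)..u, (x:ℂ) ^ (-1 - (s - ((s.re:ℝ):ℂ))) * η x)) / 2) * hVR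

lemma primI_cont (hloc : LocallyIntegrableOn η (Set.Ici 1)) (s' : ℂ) :
    ContinuousOn (fun x : ℝ => ∫ v in (1:ℝ)..x, (v:ℂ) ^ (-(3/2):ℂ) * delta η s' v) (Ici 1) :=
  cont_primitive (fun T hT =>
    (intervalIntegrable_iff_integrableOn_Ioc_of_le hT).1 (int_delta hloc s' hT))

lemma inv_contOn : ContinuousOn (fun u : ℝ => ((u:ℂ))⁻¹) (Ici 1) := by
  apply ContinuousOn.inv₀ (Complex.continuous_ofReal.continuousOn)
  intro x hx
  exact Complex.ofReal_ne_zero.2 (by linarith [mem_Ici.1 hx])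

end

/-- the difference D(t) = δ_s(t) - δ_{1+iτ}(t) satisfies the stated
double-integral identity, with D(1) = 0 and D'(1) = 0. -/
theorem stmt10 (η : ℝ → ℂ) (s : ℂ) (c : ℝ) (D : ℝ → ℂ)
    (hc : ∀ t : ℝ, 1 ≤ t → ‖η t‖ ≤ c)
    (hloc : LocallyIntegrableOn η (Set.Ici 1))
    (hre : s.re ∈ Set.Icc (0:ℝ) 1) (hre' : s.re ≠ 1/2) (him : s.im ≠ 0)
    (hD : ∀ t : ℝ, D t = delta η s t - delta η (1 + Complex.I * s.im) t) :
    (∀ t : ℝ, 1 ≤ t →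
      D t = ((s.re : ℂ) - 1/2) ^ 2 * ((t ^ ((1:ℝ)/2) : ℝ) : ℂ) *
            (∫ u in (1:ℝ)..t, (u : ℂ)⁻¹ *
              ∫ v in (1:ℝ)..u, (v : ℂ) ^ (-(3/2) : ℂ) * delta η s v)
          - (1/4) * ((t ^ ((1:ℝ)/2) : ℝ) : ℂ) *
            (∫ u in (1:ℝ)..t, (u : ℂ)⁻¹ *
              ∫ v in (1:ℝ)..u, (v : ℂ) ^ (-(3/2) : ℂ) *
                delta η (1 + Complex.I * s.im) v)) ∧
    D 1 = 0 ∧ HasDerivWithinAt D 0 (Set.Ici 1) 1 := by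
  have hs : s.re ≠ 1/2 := hre'
  set f : ℝ → ℂ := fun u : ℝ =>
    (1/2 : ℂ) * (u:ℂ) ^ (-(3/2):ℂ) *
      (psi η s u + psi η (1 - (starRingEnd ℂ) s) u
        - psi η (1 + Complex.I * (s.im:ℝ)) u - psi η (Complex.I * (s.im:ℝ)) u) with hf
  have hfcont : ContinuousOn f (Ici 1) := by
    apply ContinuousOn.mul
    · exact continuousOn_const.mul (cpow_contOn _)
    · exact (((psi_cont hloc _).add (psi_cont hloc _)).sub (psi_cont hloc _)).sub
        (psi_cont hloc _)
  have part1 : ∀ t : ℝ, 1 ≤ t →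
      D t = ((s.re : ℂ) - 1/2) ^ 2 * ((t ^ ((1:ℝ)/2) : ℝ) : ℂ) *
            (∫ u in (1:ℝ)..t, (u : ℂ)⁻¹ *
              ∫ v in (1:ℝ)..u, (v : ℂ) ^ (-(3/2) : ℂ) * delta η s v)
          - (1/4) * ((t ^ ((1:ℝ)/2) : ℝ) : ℂ) *
            (∫ u in (1:ℝ)..t, (u : ℂ)⁻¹ *
              ∫ v in (1:ℝ)..u, (v : ℂ) ^ (-(3/2) : ℂ) *
                delta η (1 + Complex.I * s.im) v) := by
    intro t ht
    rw [hD t]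
    have g1int : IntervalIntegrable
        (fun u : ℝ => (u:ℂ)⁻¹ * ∫ v in (1:ℝ)..u, (v:ℂ) ^ (-(3/2):ℂ) * delta η s v)
        volume 1 t :=
      ((inv_contOn.mono (uIcc_sub t ht)).mul
        ((primI_cont hloc s).mono (uIcc_sub t ht))).intervalIntegrable
    have g2int : IntervalIntegrable
        (fun u : ℝ => (u:ℂ)⁻¹ * ∫ v in (1:ℝ)..u, (v:ℂ) ^ (-(3/2):ℂ) *
          delta η (1 + Complex.I * (s.im:ℝ)) v) volume 1 t :=
      ((inv_contOn.mono (uIcc_sub t ht)).mul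
        ((primI_cont hloc _).mono (uIcc_sub t ht))).intervalIntegrable
    have split : ((s.re : ℂ) - 1/2) ^ 2 * ((t ^ ((1:ℝ)/2) : ℝ) : ℂ) *
            (∫ u in (1:ℝ)..t, (u : ℂ)⁻¹ *
              ∫ v in (1:ℝ)..u, (v : ℂ) ^ (-(3/2) : ℂ) * delta η s v)
          - (1/4) * ((t ^ ((1:ℝ)/2) : ℝ) : ℂ) *
            (∫ u in (1:ℝ)..t, (u : ℂ)⁻¹ *
              ∫ v in (1:ℝ)..u, (v : ℂ) ^ (-(3/2) : ℂ) *
                delta η (1 + Complex.I * s.im) v)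
        = ((t ^ ((1:ℝ)/2) : ℝ) : ℂ) * ∫ u in (1:ℝ)..t,
            (((s.re : ℂ) - 1/2) ^ 2 *
                ((u:ℂ)⁻¹ * ∫ v in (1:ℝ)..u, (v:ℂ) ^ (-(3/2):ℂ) * delta η s v)
              - (1/4) * ((u:ℂ)⁻¹ * ∫ v in (1:ℝ)..u, (v:ℂ) ^ (-(3/2):ℂ) *
                  delta η (1 + Complex.I * (s.im:ℝ)) v)) := by
      rw [intervalIntegral.integral_sub (g1int.const_mul _) (g2int.const_mul _),
        intervalIntegral.integral_const_mul, intervalIntegral.integral_const_mul]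
      ring
    rw [split]
    have hcong2 : EqOn
        (fun u : ℝ => (((s.re : ℂ) - 1/2) ^ 2 *
            ((u:ℂ)⁻¹ * ∫ v in (1:ℝ)..u, (v:ℂ) ^ (-(3/2):ℂ) * delta η s v)
          - (1/4) * ((u:ℂ)⁻¹ * ∫ v in (1:ℝ)..u, (v:ℂ) ^ (-(3/2):ℂ) *
              delta η (1 + Complex.I * (s.im:ℝ)) v))) f (uIcc 1 t) := by
      intro x hx
      rw [uIcc_of_le ht] at hx
      have hx1 : (1:ℝ) ≤ x := hx.1
      have hx0 : (0:ℝ) < x := lt_of_lt_of_le one_pos hx1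
      have hxne : (x:ℂ) ≠ 0 := Complex.ofReal_ne_zero.2 hx0.ne'
      have hic := inner_comb hloc hs hx1
      have hx3 : (x:ℂ)⁻¹ * (x:ℂ) ^ (-(1/2):ℂ) = (x:ℂ) ^ (-(3/2):ℂ) := by
        rw [show ((x:ℂ))⁻¹ = (x:ℂ) ^ (-1 : ℂ) from (Complex.cpow_neg_one x).symm,
          ← Complex.cpow_add _ _ hxne]
        norm_num
      show _ = f x
      rw [hf]
      calc ((s.re : ℂ) - 1/2) ^ 2 *
            ((x:ℂ)⁻¹ * ∫ v in (1:ℝ)..x, (v:ℂ) ^ (-(3/2):ℂ) * delta η s v)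
          - (1/4) * ((x:ℂ)⁻¹ * ∫ v in (1:ℝ)..x, (v:ℂ) ^ (-(3/2):ℂ) *
              delta η (1 + Complex.I * (s.im:ℝ)) v)
          = (x:ℂ)⁻¹ * ((((s.re:ℝ):ℂ) - 1/2)^2 *
              (∫ v in (1:ℝ)..x, (v:ℂ) ^ (-(3/2):ℂ) * delta η s v)
            - (1/4) * (∫ v in (1:ℝ)..x, (v:ℂ) ^ (-(3/2):ℂ) *
                delta η (1 + Complex.I * (s.im:ℝ)) v)) := by ring
        _ = (x:ℂ)⁻¹ * ((1/2) * (x:ℂ) ^ (-(1/2):ℂ) *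
              (psi η s x + psi η (1 - (starRingEnd ℂ) s) x
                - psi η (1 + Complex.I * (s.im:ℝ)) x - psi η (Complex.I * (s.im:ℝ)) x)) := by
            rw [hic]
        _ = (1/2 : ℂ) * (x:ℂ) ^ (-(3/2):ℂ) *
              (psi η s x + psi η (1 - (starRingEnd ℂ) s) x
                - psi η (1 + Complex.I * (s.im:ℝ)) x - psi η (Complex.I * (s.im:ℝ)) x) := by
            rw [← hx3]; ring
    rw [intervalIntegral.integral_congr hcong2]
    exact key hloc hs ht
  refine ⟨part1, ?_, ?_⟩
  · rw [hD 1]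
    simp [delta, psi_one]
  · -- derivative at 1
    have hT : HasDerivWithinAt (fun x : ℝ => ((x ^ ((1:ℝ)/2) : ℝ) : ℂ)) ((1/2 : ℂ))
        (Ici 1) 1 := by
      have h := (Real.hasDerivAt_rpow_const (x := (1:ℝ)) (p := (1:ℝ)/2)
        (Or.inl one_ne_zero)).ofReal_comp
      have h2 := h.hasDerivWithinAt (s := Ici 1)
      exact h2.congr_deriv (by norm_num [Real.one_rpow])
    have hf1 : f 1 = 0 := by
      rw [hf]
      simp only [psi_one]
      ring
    have hfint : IntervalIntegrable f volume 1 1 :=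
      (hfcont.mono (uIcc_sub 1 le_rfl)).intervalIntegrable
    have hInt : HasDerivWithinAt (fun x : ℝ => ∫ u in (1:ℝ)..x, f u) (f 1) (Ici 1) 1 :=
      intervalIntegral.integral_hasDerivWithinAt_right hfint
        ((hfcont.mono Ioi_subset_Ici_self).stronglyMeasurableAtFilter_nhdsWithin
          measurableSet_Ioi 1)
        ((hfcont 1 (by simp)).mono Ioi_subset_Ici_self)
    have hprod := hT.mul hInt
    have hval : (1/2 : ℂ) * (∫ u in (1:ℝ)..(1:ℝ), f u) + (((1:ℝ) ^ ((1:ℝ)/2) : ℝ) : ℂ) * f 1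
        = 0 := by
      rw [intervalIntegral.integral_same, hf1]
      ring
    rw [hval] at hprod
    apply hprod.congr
    · intro y hy
      rw [hD y]
      exact key hloc hs hy
    · rw [hD 1]
      exact key hloc hs le_rfl
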